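/- Let n ≥ 1 and let λ₀, λ₁, …, λₙ be pairwise distinct complex numbers, all with nonzero real part. For 1 ≤ r ≤ n define h_r(t) = ∑_{j=0}^{r} g_t(λⱼ) · ∏_{0 ≤ k ≤ r, k≠j} (λⱼ − λₖ)⁻¹ for t ≠ 0, and h_0(t) = g_t(λ₀). Then for every t ≠ 0 the integral ∫_{−∞}^{∞} h_{n−1}(s) · g_{t−s}(λₙ) ds converges absolutely and equals h_n(t). (Equivalently, for t ≠ 0 the n-th divided difference of g_t at λ₀, …, λₙ equals the (n+1)-fold convolution g_·(λ₀) ∗ ⋯ ∗ g_·(λₙ) evaluated at t.) -/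

import Mathlib

open Finset MeasureTheory

/-- The kernel of Green's function of the bounded solutions problem:
`g t λ = e^{λt}` if `t > 0` and `Re λ < 0`, `g t λ = −e^{λt}` if `t < 0` and
`Re λ > 0`, and `g t λ = 0` otherwise. -/
noncomputable def g (t : ℝ) (lam : ℂ) : ℂ :=
  if 0 < t ∧ lam.re < 0 then Complex.exp (lam * t)
  else if t < 0 ∧ 0 < lam.re then -Complex.exp (lam * t)
  else 0

/-- `hg lam r t` is the `r`-th divided difference of `g_t` at the points
`lam 0, …, lam r`: `∑_{j=0}^{r} g_t(lam j) ∏_{k ≤ r, k ≠ j} (lam j − lam k)⁻¹`. -/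
noncomputable def hg (lam : ℕ → ℂ) (r : ℕ) (t : ℝ) : ℂ :=
  ∑ j ∈ Finset.range (r + 1),
    g t (lam j) * ∏ k ∈ (Finset.range (r + 1)).erase j, (lam j - lam k)⁻¹

open Set Filter Topology Polynomial

lemma norm_cexp (c : ℂ) (s : ℝ) : ‖Complex.exp (c * s)‖ = Real.exp (c.re * s) := by
  rw [Complex.norm_exp]
  norm_num [Complex.mul_re]

lemma cexp_tendsto_atTop (c : ℂ) (hc : c.re < 0) :
    Tendsto (fun y : ℝ => Complex.exp (c * y) / c) atTop (nhds 0) := by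
  have h : Tendsto (fun y : ℝ => c.re * y) atTop atBot :=
    tendsto_id.const_mul_atTop_of_neg hc
  have h2 : Tendsto (fun y : ℝ => Real.exp (c.re * y) / ‖c‖) atTop (nhds 0) := by
    simpa using (Real.tendsto_exp_atBot.comp h).div_const ‖c‖
  exact squeeze_zero_norm (fun y => by rw [norm_div, norm_cexp]) h2

lemma intOn_Ioi (c : ℂ) (hc : c.re < 0) (a : ℝ) :
    IntegrableOn (fun s : ℝ => Complex.exp (c * s)) (Ioi a) := by
  refine Integrable.mono' (exp_neg_integrableOn_Ioi a (by linarith : (0:ℝ) < -c.re)) ?_ ?_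
  · exact (Complex.continuous_exp.comp (continuous_const.mul Complex.continuous_ofReal)).aestronglyMeasurable
  · filter_upwards with s
    rw [norm_cexp]
    simp

lemma hasDeriv_cexp (c : ℂ) (hc : c ≠ 0) (x : ℝ) :
    HasDerivAt (fun y : ℝ => Complex.exp (c * y) / c) (Complex.exp (c * x)) x := by
  rw [← mul_div_cancel_right₀ (Complex.exp (c * x)) hc]
  apply ((Complex.hasDerivAt_exp _).comp x _).div_const c
  simpa only [mul_one, id_eq] using ((hasDerivAt_id (x : ℂ)).const_mul c).comp_ofReal

lemma int_Ioi (c : ℂ) (hc : c.re < 0) (a : ℝ) :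
    ∫ s in Ioi a, Complex.exp (c * s) = -(Complex.exp (c * a) / c) := by
  have hc0 : c ≠ 0 := fun h => by simp [h] at hc
  have := integral_Ioi_of_hasDerivAt_of_tendsto
    (f := fun y : ℝ => Complex.exp (c * y) / c) (f' := fun y : ℝ => Complex.exp (c * y))
    (hasDeriv_cexp c hc0 a).continuousAt.continuousWithinAt
    (fun x _ => hasDeriv_cexp c hc0 x) (intOn_Ioi c hc a) (cexp_tendsto_atTop c hc)
  rw [this]; ring

lemma norm_cexp' (c : ℂ) (s : ℝ) : ‖Complex.exp (c * s)‖ = Real.exp (c.re * s) := by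
  rw [Complex.norm_exp]
  norm_num [Complex.mul_re]

lemma rexp_intOn_Iio (b a : ℝ) (hb : 0 < b) :
    IntegrableOn (fun s : ℝ => Real.exp (b * s)) (Iio a) := by
  have h1 : Integrable ((Ioi (-a)).indicator (fun x : ℝ => Real.exp (-b * x))) :=
    (integrable_indicator_iff measurableSet_Ioi).2 (exp_neg_integrableOn_Ioi _ hb)
  have h2 := h1.comp_neg
  have h3 : (fun x : ℝ => (Ioi (-a)).indicator (fun x : ℝ => Real.exp (-b * x)) (-x))
      = (Iio a).indicator (fun s : ℝ => Real.exp (b * s)) := by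
    funext x
    by_cases hx : x < a
    · rw [Set.indicator_of_mem (by simpa using hx), Set.indicator_of_mem (by simpa using hx)]
      ring_nf
    · rw [Set.indicator_of_notMem (by simpa using hx), Set.indicator_of_notMem (by simpa using hx)]
  rw [h3] at h2
  exact (integrable_indicator_iff measurableSet_Iio).1 h2

lemma intOn_Iio (c : ℂ) (hc : 0 < c.re) (a : ℝ) :
    IntegrableOn (fun s : ℝ => Complex.exp (c * s)) (Iio a) := by
  refine Integrable.mono' (rexp_intOn_Iio c.re a hc) ?_ ?_
  · exact (Complex.continuous_exp.comp (continuous_const.mul Complex.continuous_ofReal)).aestronglyMeasurable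
  · filter_upwards with s
    rw [norm_cexp' c s]

lemma hasDeriv_cexp' (c : ℂ) (hc : c ≠ 0) (x : ℝ) :
    HasDerivAt (fun y : ℝ => Complex.exp (c * y) / c) (Complex.exp (c * x)) x := by
  rw [← mul_div_cancel_right₀ (Complex.exp (c * x)) hc]
  apply ((Complex.hasDerivAt_exp _).comp x _).div_const c
  simpa only [mul_one, id_eq] using ((hasDerivAt_id (x : ℂ)).const_mul c).comp_ofReal

lemma cexp_tendsto_atBot (c : ℂ) (hc : 0 < c.re) :
    Tendsto (fun y : ℝ => Complex.exp (c * y) / c) atBot (nhds 0) := by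
  have h : Tendsto (fun y : ℝ => c.re * y) atBot atBot :=
    tendsto_id.const_mul_atBot hc
  have h2 : Tendsto (fun y : ℝ => Real.exp (c.re * y) / ‖c‖) atBot (nhds 0) := by
    simpa using (Real.tendsto_exp_atBot.comp h).div_const ‖c‖
  exact squeeze_zero_norm (fun y => by rw [norm_div, norm_cexp']) h2

lemma int_Iio (c : ℂ) (hc : 0 < c.re) (a : ℝ) :
    ∫ s in Iio a, Complex.exp (c * s) = Complex.exp (c * a) / c := by
  have hc0 : c ≠ 0 := fun h => by simp [h] at hc
  have hint : IntegrableOn (fun s : ℝ => Complex.exp (c * s)) (Iic a) :=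
    (intOn_Iio c hc a).congr_set_ae Iio_ae_eq_Iic.symm
  have := integral_Iic_of_hasDerivAt_of_tendsto
    (f := fun y : ℝ => Complex.exp (c * y) / c) (f' := fun y : ℝ => Complex.exp (c * y))
    (hasDeriv_cexp' c hc0 a).continuousAt.continuousWithinAt
    (fun x _ => hasDeriv_cexp' c hc0 x) hint (cexp_tendsto_atBot c hc)
  rw [← integral_Iic_eq_integral_Iio, this, sub_zero]

lemma leadingCoeff_basisDivisor (x y : ℂ) :
    (Lagrange.basisDivisor x y).leadingCoeff = (x - y)⁻¹ := by
  rw [Lagrange.basisDivisor, leadingCoeff_mul, leadingCoeff_C, (monic_X_sub_C y).leadingCoeff,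
    mul_one]

lemma sum_prod_inv_eq_zero {n : ℕ} (hn : 1 ≤ n) (lam : ℕ → ℂ)
    (hinj : Set.InjOn lam (Finset.range (n + 1))) :
    ∑ j ∈ Finset.range (n + 1),
      ∏ k ∈ (Finset.range (n + 1)).erase j, (lam j - lam k)⁻¹ = 0 := by
  have hne : (Finset.range (n + 1)).Nonempty := ⟨0, by simp⟩
  have h := Lagrange.sum_basis hinj hne
  have h2 := congrArg (fun p => Polynomial.coeff p n) h
  simp only [finset_sum_coeff] at h2
  rw [coeff_one, if_neg (by omega : ¬ (n : ℕ) = 0)] at h2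
  rw [← h2]
  refine Finset.sum_congr rfl fun j hj => ?_
  have hd : (Lagrange.basis (Finset.range (n + 1)) lam j).natDegree = n := by
    rw [Lagrange.natDegree_basis hinj hj, Finset.card_range]
    omega
  set p := Lagrange.basis (Finset.range (n + 1)) lam j with hp
  have hc : p.coeff n = p.leadingCoeff := by rw [← hd, coeff_natDegree]
  rw [hc, hp, Lagrange.basis, leadingCoeff_prod]
  exact (Finset.prod_congr rfl fun k _ => leadingCoeff_basisDivisor _ _).symm


lemma g_of_neg_re {lam : ℂ} (h : lam.re < 0) (s : ℝ) :
    g s lam = if 0 < s then Complex.exp (lam * s) else 0 := by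
  have h' : ¬ (0 < lam.re) := not_lt.2 h.le
  unfold g
  by_cases hs : 0 < s
  · simp [hs, h]
  · simp [hs, h']

lemma g_of_pos_re {lam : ℂ} (h : 0 < lam.re) (s : ℝ) :
    g s lam = if s < 0 then -Complex.exp (lam * s) else 0 := by
  have h' : ¬ (lam.re < 0) := not_lt.2 h.le
  unfold g
  by_cases hs : s < 0
  · simp [hs, h, h']
  · simp [hs, h']

lemma exp_split (lam mu : ℂ) (t s : ℝ) :
    Complex.exp (lam * s) * Complex.exp (mu * ((t - s : ℝ) : ℂ))
      = Complex.exp (mu * t) * Complex.exp ((lam - mu) * s) := by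
  rw [← Complex.exp_add, ← Complex.exp_add]
  push_cast
  ring_nf

lemma exp_merge (lam mu : ℂ) (t : ℝ) :
    Complex.exp (mu * t) * Complex.exp ((lam - mu) * t) = Complex.exp (lam * t) := by
  rw [← Complex.exp_add]
  ring_nf


lemma conv_case1 {lam mu : ℂ} (hl : lam.re < 0) (hm : mu.re < 0) (hne : lam ≠ mu)
    {t : ℝ} (ht : t ≠ 0) :
    Integrable (fun s : ℝ => g s lam * g (t - s) mu) ∧
    ∫ s : ℝ, g s lam * g (t - s) mu = (g t lam - g t mu) * (lam - mu)⁻¹ := by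
  have hlm : lam - mu ≠ 0 := sub_ne_zero.2 hne
  have hfun : (fun s : ℝ => g s lam * g (t - s) mu)
      = (Ioo (0:ℝ) t).indicator
        (fun s : ℝ => Complex.exp (mu * t) * Complex.exp ((lam - mu) * s)) := by
    funext s
    rw [g_of_neg_re hl, g_of_neg_re hm]
    by_cases h1 : 0 < s
    · by_cases h2 : s < t
      · rw [Set.indicator_of_mem (Set.mem_Ioo.mpr ⟨h1, h2⟩), if_pos h1,
          if_pos (by linarith : (0:ℝ) < t - s)]
        exact exp_split lam mu t s
      · rw [Set.indicator_of_notMem (fun hs => h2 (Set.mem_Ioo.mp hs).2),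
          if_neg (by simp at h2 ⊢; linarith : ¬ (0:ℝ) < t - s), mul_zero]
    · rw [Set.indicator_of_notMem (fun hs => h1 (Set.mem_Ioo.mp hs).1), if_neg h1, zero_mul]
  rw [hfun]
  by_cases hts : 0 < t
  · have hIOn : IntegrableOn
        (fun s : ℝ => Complex.exp (mu * t) * Complex.exp ((lam - mu) * s)) (Ioo 0 t) := by
      apply IntegrableOn.mono_set _ Set.Ioo_subset_Ioc_self
      exact (Complex.continuous_exp.comp
        (continuous_const.mul Complex.continuous_ofReal)).integrableOn_Ioc.const_mul _
    constructor
    · exact (integrable_indicator_iff measurableSet_Ioo).2 hIOn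
    · rw [integral_indicator measurableSet_Ioo, ← integral_Ioc_eq_integral_Ioo,
        ← intervalIntegral.integral_of_le hts.le, intervalIntegral.integral_const_mul,
        integral_exp_mul_complex hlm,
        g_of_neg_re hl, g_of_neg_re hm, if_pos hts, if_pos hts]
      rw [div_eq_mul_inv, ← mul_assoc, mul_sub, exp_merge]
      norm_num
  · have he : Ioo (0:ℝ) t = ∅ := Set.Ioo_eq_empty hts
    rw [he]
    constructor
    · simpa [Set.indicator_empty] using (integrable_zero ℝ ℂ volume)
    · simp [Set.indicator_empty, g_of_neg_re hl, g_of_neg_re hm, hts]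


lemma conv_case2 {lam mu : ℂ} (hl : lam.re < 0) (hm : 0 < mu.re) {t : ℝ} (ht : t ≠ 0) :
    Integrable (fun s : ℝ => g s lam * g (t - s) mu) ∧
    ∫ s : ℝ, g s lam * g (t - s) mu = (g t lam - g t mu) * (lam - mu)⁻¹ := by
  have hre : (lam - mu).re < 0 := by simp [Complex.sub_re]; linarith
  have hlm : lam - mu ≠ 0 := fun h => by simp [h] at hre
  have hfun : (fun s : ℝ => g s lam * g (t - s) mu)
      = (Ioi (max 0 t)).indicator
        (fun s : ℝ => -Complex.exp (mu * t) * Complex.exp ((lam - mu) * s)) := by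
    funext s
    rw [g_of_neg_re hl, g_of_pos_re hm]
    by_cases h1 : 0 < s
    · by_cases h2 : t - s < 0
      · rw [Set.indicator_of_mem (Set.mem_Ioi.mpr (max_lt h1 (by linarith))),
          if_pos h1, if_pos h2]
        rw [← neg_mul_comm, neg_mul, exp_split lam mu t s]
        ring
      · rw [Set.indicator_of_notMem
          (fun hs => h2 (by have := Set.mem_Ioi.mp hs; have := le_max_right (0:ℝ) t; linarith)),
          if_neg h2, mul_zero]
    · rw [Set.indicator_of_notMem
        (fun hs => h1 (lt_of_le_of_lt (le_max_left 0 t) (Set.mem_Ioi.mp hs))), if_neg h1, zero_mul]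
  rw [hfun]
  have hIOn : IntegrableOn
      (fun s : ℝ => -Complex.exp (mu * t) * Complex.exp ((lam - mu) * s)) (Ioi (max 0 t)) :=
    (intOn_Ioi (lam - mu) hre (max 0 t)).const_mul _
  refine ⟨(integrable_indicator_iff measurableSet_Ioi).2 hIOn, ?_⟩
  rw [integral_indicator measurableSet_Ioi, integral_const_mul, int_Ioi (lam - mu) hre]
  rcases ht.lt_or_gt with htn | htp
  · rw [max_eq_left htn.le, g_of_neg_re hl, g_of_pos_re hm, if_neg (by linarith), if_pos htn]
    rw [Complex.ofReal_zero, mul_zero, Complex.exp_zero]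
    field_simp
    ring
  · rw [max_eq_right htp.le, g_of_neg_re hl, g_of_pos_re hm, if_pos htp, if_neg (by linarith)]
    rw [div_eq_mul_inv, mul_neg, neg_mul, neg_neg, ← mul_assoc, exp_merge]
    ring


lemma conv_case3 {lam mu : ℂ} (hl : 0 < lam.re) (hm : mu.re < 0) {t : ℝ} (ht : t ≠ 0) :
    Integrable (fun s : ℝ => g s lam * g (t - s) mu) ∧
    ∫ s : ℝ, g s lam * g (t - s) mu = (g t lam - g t mu) * (lam - mu)⁻¹ := by
  have hre : 0 < (lam - mu).re := by simp [Complex.sub_re]; linarith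
  have hlm : lam - mu ≠ 0 := fun h => by simp [h] at hre
  have hfun : (fun s : ℝ => g s lam * g (t - s) mu)
      = (Iio (min 0 t)).indicator
        (fun s : ℝ => -Complex.exp (mu * t) * Complex.exp ((lam - mu) * s)) := by
    funext s
    rw [g_of_pos_re hl, g_of_neg_re hm]
    by_cases h1 : s < 0
    · by_cases h2 : 0 < t - s
      · rw [Set.indicator_of_mem (Set.mem_Iio.mpr (lt_min h1 (by linarith))),
          if_pos h1, if_pos h2, neg_mul, neg_mul, exp_split lam mu t s]
      · rw [Set.indicator_of_notMem
          (fun hs => h2 (by have := Set.mem_Iio.mp hs; have := min_le_right (0:ℝ) t; linarith)),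
          if_neg h2, mul_zero]
    · rw [Set.indicator_of_notMem
        (fun hs => h1 (lt_of_lt_of_le (Set.mem_Iio.mp hs) (min_le_left 0 t))), if_neg h1, zero_mul]
  rw [hfun]
  have hIOn : IntegrableOn
      (fun s : ℝ => -Complex.exp (mu * t) * Complex.exp ((lam - mu) * s)) (Iio (min 0 t)) :=
    (intOn_Iio (lam - mu) hre (min 0 t)).const_mul _
  refine ⟨(integrable_indicator_iff measurableSet_Iio).2 hIOn, ?_⟩
  rw [integral_indicator measurableSet_Iio, integral_const_mul, int_Iio (lam - mu) hre]
  rcases ht.lt_or_gt with htn | htp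
  · rw [min_eq_right htn.le, g_of_pos_re hl, g_of_neg_re hm, if_pos htn, if_neg (by linarith)]
    rw [← exp_merge lam mu t]
    ring
  · rw [min_eq_left htp.le, g_of_pos_re hl, g_of_neg_re hm, if_neg (by linarith), if_pos htp]
    rw [Complex.ofReal_zero, mul_zero, Complex.exp_zero]
    field_simp
    ring

lemma conv_case4 {lam mu : ℂ} (hl : 0 < lam.re) (hm : 0 < mu.re) (hne : lam ≠ mu)
    {t : ℝ} (ht : t ≠ 0) :
    Integrable (fun s : ℝ => g s lam * g (t - s) mu) ∧
    ∫ s : ℝ, g s lam * g (t - s) mu = (g t lam - g t mu) * (lam - mu)⁻¹ := by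
  have hlm : lam - mu ≠ 0 := sub_ne_zero.2 hne
  have hfun : (fun s : ℝ => g s lam * g (t - s) mu)
      = (Ioo t (0:ℝ)).indicator
        (fun s : ℝ => Complex.exp (mu * t) * Complex.exp ((lam - mu) * s)) := by
    funext s
    rw [g_of_pos_re hl, g_of_pos_re hm]
    by_cases h1 : s < 0
    · by_cases h2 : t - s < 0
      · rw [Set.indicator_of_mem (Set.mem_Ioo.mpr ⟨by linarith, h1⟩), if_pos h1, if_pos h2,
          neg_mul_neg, exp_split lam mu t s]
      · rw [Set.indicator_of_notMem
          (fun hs => h2 (by have := (Set.mem_Ioo.mp hs).1; linarith)), if_neg h2, mul_zero]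
    · rw [Set.indicator_of_notMem (fun hs => h1 (Set.mem_Ioo.mp hs).2), if_neg h1, zero_mul]
  rw [hfun]
  rcases ht.lt_or_gt with htn | htp
  · have hIOn : IntegrableOn
        (fun s : ℝ => Complex.exp (mu * t) * Complex.exp ((lam - mu) * s)) (Ioo t 0) := by
      apply IntegrableOn.mono_set _ Set.Ioo_subset_Ioc_self
      exact (Complex.continuous_exp.comp
        (continuous_const.mul Complex.continuous_ofReal)).integrableOn_Ioc.const_mul _
    refine ⟨(integrable_indicator_iff measurableSet_Ioo).2 hIOn, ?_⟩
    rw [integral_indicator measurableSet_Ioo, ← integral_Ioc_eq_integral_Ioo,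
      ← intervalIntegral.integral_of_le htn.le, intervalIntegral.integral_const_mul,
      integral_exp_mul_complex hlm,
      g_of_pos_re hl, g_of_pos_re hm, if_pos htn, if_pos htn]
    rw [div_eq_mul_inv, ← mul_assoc, mul_sub, exp_merge, Complex.ofReal_zero, mul_zero,
      Complex.exp_zero]
    ring
  · have he : Ioo t (0:ℝ) = ∅ := Set.Ioo_eq_empty (by intro h; linarith)
    rw [he]
    constructor
    · simpa [Set.indicator_empty] using (integrable_zero ℝ ℂ volume)
    · simp [Set.indicator_empty, g_of_pos_re hl, g_of_pos_re hm, not_lt.2 htp.le]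

lemma conv_g {lam mu : ℂ} (hl : lam.re ≠ 0) (hm : mu.re ≠ 0) (hne : lam ≠ mu)
    {t : ℝ} (ht : t ≠ 0) :
    Integrable (fun s : ℝ => g s lam * g (t - s) mu) ∧
    ∫ s : ℝ, g s lam * g (t - s) mu = (g t lam - g t mu) * (lam - mu)⁻¹ := by
  rcases hl.lt_or_gt with hl | hl <;> rcases hm.lt_or_gt with hm | hm
  · exact conv_case1 hl hm hne ht
  · exact conv_case2 hl hm ht
  · exact conv_case3 hl hm ht
  · exact conv_case4 hl hm hne ht


/-- For pairwise distinct `λ₀, …, λₙ` with nonzero real parts and `t ≠ 0`, the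
convolution of the `(n−1)`-th divided difference of `g_·` at `λ₀, …, λ_{n−1}` with
`g_·(λₙ)` converges absolutely and equals the `n`-th divided difference at
`λ₀, …, λₙ`; i.e. the `n`-th divided difference of `g_t` is the `(n+1)`-fold
convolution `g_·(λ₀) ∗ ⋯ ∗ g_·(λₙ)`. -/
theorem stmt_12 (n : ℕ) (hn : 1 ≤ n) (lam : ℕ → ℂ)
    (hdist : ∀ j k : ℕ, j ≤ n → k ≤ n → j ≠ k → lam j ≠ lam k)
    (hre : ∀ j : ℕ, j ≤ n → (lam j).re ≠ 0)
    (t : ℝ) (ht : t ≠ 0) :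
    Integrable (fun s : ℝ => hg lam (n - 1) s * g (t - s) (lam n)) ∧
    ∫ s : ℝ, hg lam (n - 1) s * g (t - s) (lam n) = hg lam n t := by
  have hn1 : n - 1 + 1 = n := Nat.succ_pred_eq_of_pos hn
  have hfun : (fun s : ℝ => hg lam (n - 1) s * g (t - s) (lam n))
      = fun s : ℝ => ∑ j ∈ Finset.range n,
          (∏ k ∈ (Finset.range n).erase j, (lam j - lam k)⁻¹)
            * (g s (lam j) * g (t - s) (lam n)) := by
    funext s
    rw [hg, hn1, Finset.sum_mul]
    exact Finset.sum_congr rfl fun j _ => by ring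
  have hbase : ∀ j ∈ Finset.range n,
      Integrable (fun s : ℝ => g s (lam j) * g (t - s) (lam n)) ∧
      ∫ s : ℝ, g s (lam j) * g (t - s) (lam n)
        = (g t (lam j) - g t (lam n)) * (lam j - lam n)⁻¹ := by
    intro j hj
    have hj' := Finset.mem_range.mp hj
    exact conv_g (hre j (by omega)) (hre n le_rfl) (hdist j n (by omega) le_rfl (by omega)) ht
  have hint : Integrable (fun s : ℝ => hg lam (n - 1) s * g (t - s) (lam n)) := by
    rw [hfun]
    exact integrable_finset_sum _ (fun j hj => ((hbase j hj).1).const_mul _)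
  refine ⟨hint, ?_⟩
  have hstep : ∫ s : ℝ, hg lam (n - 1) s * g (t - s) (lam n)
      = ∑ j ∈ Finset.range n,
          (∏ k ∈ (Finset.range n).erase j, (lam j - lam k)⁻¹)
            * ((g t (lam j) - g t (lam n)) * (lam j - lam n)⁻¹) := by
    rw [show (fun s : ℝ => hg lam (n - 1) s * g (t - s) (lam n)) = _ from hfun]
    rw [integral_finset_sum _ (fun j hj => ((hbase j hj).1).const_mul _)]
    exact Finset.sum_congr rfl fun j hj => by rw [integral_const_mul, (hbase j hj).2]
  rw [hstep]
  -- Lagrange identity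
  have hinj : Set.InjOn lam (Finset.range (n + 1)) := by
    intro a ha b hb hab
    by_contra hne
    exact hdist a b (by simpa using Nat.lt_succ_iff.mp (Finset.mem_range.mp ha))
      (by simpa using Nat.lt_succ_iff.mp (Finset.mem_range.mp hb)) hne hab
  have hsum0 := sum_prod_inv_eq_zero hn lam hinj
  rw [Finset.sum_range_succ] at hsum0
  have hDn : ∑ j ∈ Finset.range n, ∏ k ∈ (Finset.range (n + 1)).erase j, (lam j - lam k)⁻¹
      = -∏ k ∈ (Finset.range (n + 1)).erase n, (lam n - lam k)⁻¹ :=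
    eq_neg_of_add_eq_zero_left hsum0
  have hdj : ∀ j ∈ Finset.range n,
      (∏ k ∈ (Finset.range (n + 1)).erase j, (lam j - lam k)⁻¹)
        = (lam j - lam n)⁻¹ * ∏ k ∈ (Finset.range n).erase j, (lam j - lam k)⁻¹ := by
    intro j hj
    have hj' := Finset.mem_range.mp hj
    rw [Finset.range_add_one, Finset.erase_insert_of_ne (by omega : n ≠ j),
      Finset.prod_insert (by simp : n ∉ (Finset.range n).erase j)]
  have hDnn : (∏ k ∈ (Finset.range (n + 1)).erase n, (lam n - lam k)⁻¹)
      = ∏ k ∈ Finset.range n, (lam n - lam k)⁻¹ := by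
    rw [Finset.range_add_one, Finset.erase_insert (by simp)]
  calc ∑ j ∈ Finset.range n,
        (∏ k ∈ (Finset.range n).erase j, (lam j - lam k)⁻¹)
          * ((g t (lam j) - g t (lam n)) * (lam j - lam n)⁻¹)
      = ∑ j ∈ Finset.range n,
        (g t (lam j) * ∏ k ∈ (Finset.range (n + 1)).erase j, (lam j - lam k)⁻¹
          - g t (lam n) * ∏ k ∈ (Finset.range (n + 1)).erase j, (lam j - lam k)⁻¹) := by
        refine Finset.sum_congr rfl fun j hj => ?_
        rw [hdj j hj]; ring
    _ = ∑ j ∈ Finset.range n,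
          g t (lam j) * ∏ k ∈ (Finset.range (n + 1)).erase j, (lam j - lam k)⁻¹
        - g t (lam n) * ∑ j ∈ Finset.range n,
          ∏ k ∈ (Finset.range (n + 1)).erase j, (lam j - lam k)⁻¹ := by
        rw [Finset.sum_sub_distrib, Finset.mul_sum]
    _ = ∑ j ∈ Finset.range n,
          g t (lam j) * ∏ k ∈ (Finset.range (n + 1)).erase j, (lam j - lam k)⁻¹
        + g t (lam n) * ∏ k ∈ (Finset.range (n + 1)).erase n, (lam n - lam k)⁻¹ := by
        rw [hDn]; ring
    _ = ∑ j ∈ Finset.range (n + 1),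
          g t (lam j) * ∏ k ∈ (Finset.range (n + 1)).erase j, (lam j - lam k)⁻¹ :=
        (Finset.sum_range_succ _ n).symm
    _ = hg lam n t := rfl
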